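/- Every subset A of ℕ whose characteristic function is definable by a positive existential formula B(x,y) in ℕ such that the uniqueness property B(x,u) ∧ B(x,v) → u = v holds in ℕ* (under the interpretation extending ℕ) is either finite or cofinite. -/

import Mathlib

/-- Terms in the language {0, S, +, ·} with variables from `Fin n`. -/
inductive PTerm : ℕ → Type
  | var : ∀ {n}, Fin n → PTerm n
  | zero : ∀ {n}, PTerm n
  | succ : ∀ {n}, PTerm n → PTerm n
  | add : ∀ {n}, PTerm n → PTerm n → PTerm n
  | mul : ∀ {n}, PTerm n → PTerm n → PTerm n

/-- Evaluation of a term in a structure with 0, 1 (for successor `x + 1`), + and ·. -/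
def PTerm.eval {α : Type*} [Zero α] [One α] [Add α] [Mul α] :
    ∀ {n}, PTerm n → (Fin n → α) → α
  | _, .var i, v => v i
  | _, .zero, _ => 0
  | _, .succ t, v => t.eval v + 1
  | _, .add s t, v => s.eval v + t.eval v
  | _, .mul s t, v => s.eval v * t.eval v

/-- Positive existential formulas: built from equalities of terms by ∧, ∨, ∃. -/
inductive PForm : ℕ → Type
  | eq : ∀ {n}, PTerm n → PTerm n → PForm n
  | and : ∀ {n}, PForm n → PForm n → PForm n
  | or : ∀ {n}, PForm n → PForm n → PForm n
  | ex : ∀ {n}, PForm (n + 1) → PForm n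

/-- Classical satisfaction of a positive existential formula in a structure. -/
def PForm.Holds {α : Type*} [Zero α] [One α] [Add α] [Mul α] :
    ∀ {n}, PForm n → (Fin n → α) → Prop
  | _, .eq s t, v => s.eval v = t.eval v
  | _, .and φ ψ, v => φ.Holds v ∧ ψ.Holds v
  | _, .or φ ψ, v => φ.Holds v ∨ ψ.Holds v
  | _, .ex φ, v => ∃ a : α, φ.Holds (Fin.cons a v)

open Filter Topology

/-- Term evaluation is continuous over ℕ∞. -/
lemma PTerm.continuous_eval {n : ℕ} (t : PTerm n) :
    Continuous (fun v : Fin n → ℕ∞ => t.eval v) := by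
  induction t with
  | var i => simp only [PTerm.eval]; exact continuous_apply i
  | zero => simp only [PTerm.eval]; exact continuous_const
  | succ t ih => simp only [PTerm.eval]; exact ih.add continuous_const
  | add s t ihs iht => simp only [PTerm.eval]; exact ihs.add iht
  | mul s t ihs iht => simp only [PTerm.eval]; exact ihs.mul iht

/-- The coercion ℕ → ℕ∞ commutes with term evaluation. -/
lemma PTerm.cast_eval {n : ℕ} (t : PTerm n) (v : Fin n → ℕ) :
    ((t.eval v : ℕ) : ℕ∞) = t.eval (fun j => ((v j : ℕ∞))) := by
  induction t with
  | var i => simp [PTerm.eval]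
  | zero => simp [PTerm.eval]
  | succ t ih => simp [PTerm.eval, ← ih]
  | add s t ihs iht => simp [PTerm.eval, ← ihs, ← iht]
  | mul s t ihs iht => simp [PTerm.eval, ← ihs, ← iht]

/-- Overspill: if a positive existential formula holds (in ℕ) on a set of
assignments belonging to an ultrafilter, and the assignments converge
coordinatewise in ℕ∞ to `w`, then the formula holds at `w` in ℕ∞. -/
lemma PForm.overspill : ∀ {n : ℕ} (φ : PForm n) (U : Ultrafilter ℕ)
    (v : ℕ → Fin n → ℕ) (w : Fin n → ℕ∞),
    (∀ j, Filter.Tendsto (fun i => ((v i j : ℕ∞))) U (nhds (w j))) →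
    (∀ᶠ i in (U : Filter ℕ), φ.Holds (v i)) → φ.Holds w := by
  intro n φ
  induction φ with
  | eq s t =>
    intro U v w hT hH
    simp only [PForm.Holds] at hH ⊢
    have hw : Filter.Tendsto (fun i j => ((v i j : ℕ∞))) U (nhds w) :=
      tendsto_pi_nhds.2 hT
    have h1 : Filter.Tendsto (fun i => ((s.eval (v i) : ℕ) : ℕ∞)) U (nhds (s.eval w)) := by
      simpa [PTerm.cast_eval, Function.comp_def] using (s.continuous_eval.tendsto w).comp hw
    have h2 : Filter.Tendsto (fun i => ((t.eval (v i) : ℕ) : ℕ∞)) U (nhds (t.eval w)) := by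
      simpa [PTerm.cast_eval, Function.comp_def] using (t.continuous_eval.tendsto w).comp hw
    exact tendsto_nhds_unique (h1.congr' (hH.mono fun i hi => by rw [hi])) h2
  | and φ ψ ihφ ihψ =>
    intro U v w hT hH
    simp only [PForm.Holds] at hH ⊢
    exact ⟨ihφ U v w hT (hH.mono fun i hi => hi.1),
      ihψ U v w hT (hH.mono fun i hi => hi.2)⟩
  | or φ ψ ihφ ihψ =>
    intro U v w hT hH
    simp only [PForm.Holds] at hH ⊢
    rcases (Ultrafilter.eventually_or.1 hH) with h | h
    · exact Or.inl (ihφ U v w hT h)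
    · exact Or.inr (ihψ U v w hT h)
  | ex φ ih =>
    intro U v w hT hH
    have hch : ∀ i, ∃ b : ℕ, (PForm.ex φ).Holds (v i) → φ.Holds (Fin.cons b (v i)) := by
      intro i
      by_cases h : (PForm.ex φ).Holds (v i)
      · simp only [PForm.Holds] at h
        obtain ⟨b, hb⟩ := h
        exact ⟨b, fun _ => hb⟩
      · exact ⟨0, fun h' => absurd h' h⟩
    choose a ha using hch
    set V : Ultrafilter ℕ∞ := U.map (fun i => ((a i : ℕ∞))) with hV
    obtain ⟨b, hb⟩ : ∃ b, (V : Filter ℕ∞) ≤ nhds b := ⟨V.lim, V.le_nhds_lim⟩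
    rw [hV, Ultrafilter.coe_map] at hb
    refine ⟨b, ih U (fun i => Fin.cons (a i) (v i)) (Fin.cons b w) ?_ ?_⟩
    · intro j
      refine Fin.cases ?_ ?_ j
      · simpa using (show Filter.Tendsto (fun i => ((a i : ℕ∞))) U (nhds b) from hb)
      · intro j; simpa using hT j
    · exact hH.mono fun i hi => ha i hi

/-- Every subset A of ℕ whose characteristic function is defined by a positive
existential formula B(x,y) in ℕ, such that the uniqueness property
`B(x,u) ∧ B(x,v) → u = v` holds in ℕ* = ℕ∞, is either finite or cofinite. -/
theorem stmt_12 (A : Set ℕ) [DecidablePred (· ∈ A)] (B : PForm 2)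
    (hdef : ∀ a : ℕ, B.Holds (α := ℕ) ![a, if a ∈ A then 1 else 0])
    (huniq : ∀ x u v : ℕ∞, B.Holds ![x, u] → B.Holds ![x, v] → u = v) :
    A.Finite ∨ (Aᶜ : Set ℕ).Finite := by
  by_contra hc
  push_neg at hc
  obtain ⟨hA, hAc⟩ := hc
  have hfA : ∀ i : ℕ, ∃ m, m ∈ A ∧ i < m := fun i => by
    obtain ⟨m, hm1, hm2⟩ := Set.Infinite.exists_gt hA i
    exact ⟨m, hm1, hm2⟩
  have hfAc : ∀ i : ℕ, ∃ m, m ∈ Aᶜ ∧ i < m := fun i => by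
    obtain ⟨m, hm1, hm2⟩ := Set.Infinite.exists_gt hAc i
    exact ⟨m, hm1, hm2⟩
  choose f hf1 hf2 using hfA
  choose g hg1 hg2 using hfAc
  set U : Ultrafilter ℕ := Ultrafilter.of atTop with hU
  have hUle : (U : Filter ℕ) ≤ atTop := Ultrafilter.of_le atTop
  have htop : ∀ (h : ℕ → ℕ), (∀ i, i < h i) →
      Filter.Tendsto (fun i => ((h i : ℕ∞))) U (nhds ⊤) := by
    intro h hh
    rw [ENat.tendsto_nhds_top_iff_natCast_lt]
    intro m
    apply Filter.Eventually.filter_mono hUle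
    filter_upwards [Filter.eventually_ge_atTop (m + 1)] with i hi
    exact_mod_cast lt_of_lt_of_le (Nat.lt_succ_of_le le_rfl) (le_trans hi (hh i).le)
  have hB1 : B.Holds (![⊤, 1] : Fin 2 → ℕ∞) := by
    apply B.overspill U (fun i => ![f i, 1])
    · intro j
      fin_cases j
      · simpa using htop f hf2
      · simp only [Matrix.cons_val_one, Matrix.head_cons, Nat.cast_one, Nat.cast_zero]
        exact tendsto_const_nhds
    · refine Filter.Eventually.of_forall fun i => ?_
      have := hdef (f i)
      rwa [if_pos (hf1 i)] at this
  have hB0 : B.Holds (![⊤, 0] : Fin 2 → ℕ∞) := by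
    apply B.overspill U (fun i => ![g i, 0])
    · intro j
      fin_cases j
      · simpa using htop g hg2
      · simp only [Matrix.cons_val_one, Matrix.head_cons, Nat.cast_one, Nat.cast_zero]
        exact tendsto_const_nhds
    · refine Filter.Eventually.of_forall fun i => ?_
      have := hdef (g i)
      rwa [if_neg (hg1 i)] at this
  exact one_ne_zero (huniq ⊤ 1 0 hB1 hB0)
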